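/- For every A ∈ Φ* there is a unique A′ ∈ Φ* that is left-greedy and satisfies η(A) = η(A′); moreover A′ is semi-geodesic, i.e., |A′| ≤ |B| for every B ∈ Φ* with η(B) = η(A). -/

import Mathlib

/-- `P` is a piece for the presentation with defining words `R`: it occurs as a
subword of defining words in two essentially different ways. -/
def IsPiece {X : Type*} (R : Set (List X)) (P : List X) : Prop :=
  ∃ W₁ ∈ R, ∃ W₂ ∈ R, ∃ U₁ U₂ V₁ V₂ : List X,
    W₁ = U₁ ++ P ++ U₂ ∧ W₂ = V₁ ++ P ++ V₂ ∧ (U₁ ≠ V₁ ∨ U₂ ≠ V₂)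

/-- The piece-length `lp W`: the minimal number `k` such that `W` decomposes as a
concatenation of `k` pieces; `0` for the empty word, `⊤` if no decomposition exists. -/
noncomputable def pieceLength {X : Type*} (R : Set (List X)) (W : List X) : ℕ∞ :=
  sInf {n : ℕ∞ | ∃ l : List (List X),
    (∀ P ∈ l, IsPiece R P) ∧ l.flatten = W ∧ (l.length : ℕ∞) = n}

/-- The set of defining words of a presentation given by a set of relations. -/
def defWords {X : Type*} (Rel : Set (List X × List X)) : Set (List X) :=
  {W | ∃ p ∈ Rel, W = p.1 ∨ W = p.2}

/-- The `K₃²` condition: (a) the two sides of each relation start with different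
generators and end with different generators; (b) every defining word has
piece-length at least 3; (c) the words of any two distinct defining relations are
pairwise distinct (and the two sides of each relation are distinct). -/
def K32 {X : Type*} (Rel : Set (List X × List X)) : Prop :=
  (∀ p ∈ Rel, p.1.head? ≠ p.2.head? ∧ p.1.getLast? ≠ p.2.getLast?) ∧
  (∀ W ∈ defWords Rel, 3 ≤ pieceLength (defWords Rel) W) ∧
  (∀ p ∈ Rel, p.1 ≠ p.2) ∧
  (∀ p ∈ Rel, ∀ q ∈ Rel, p ≠ q →
    p.1 ≠ q.1 ∧ p.1 ≠ q.2 ∧ p.2 ≠ q.1 ∧ p.2 ≠ q.2)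

/-- The standard padding map `δ_X` on pairs of words. -/
def pad {X : Type*} : List X → List X → List (Option X × Option X)
  | [], [] => []
  | [], y :: ys => (none, some y) :: pad [] ys
  | x :: xs, [] => (some x, none) :: pad xs []
  | x :: xs, y :: ys => (some x, some y) :: pad xs ys
  termination_by a b => a.length + b.length

/-- The relators of the co-presented group of the semigroup presentation `Rel`. -/
def relators {X : Type*} (Rel : Set (List X × List X)) : Set (FreeGroup X) :=
  {g | ∃ p ∈ Rel, g = (p.1.map FreeGroup.of).prod * ((p.2.map FreeGroup.of).prod)⁻¹}

/-- Evaluation of a positive word in the co-presented group. -/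
def toG {X : Type*} (Rel : Set (List X × List X)) (w : List X) :
    PresentedGroup (relators Rel) :=
  (w.map PresentedGroup.of).prod

/-- Equality in the semigroup presented by `Rel`: the congruence on the free monoid
generated by the defining relations. -/
def SGRel {X : Type*} (Rel : Set (List X × List X)) (w u : List X) : Prop :=
  conGen (fun a b : FreeMonoid X => ∃ p ∈ Rel,
      a = FreeMonoid.ofList p.1 ∧ b = FreeMonoid.ofList p.2)
    (FreeMonoid.ofList w) (FreeMonoid.ofList u)

/-- The word metric on the co-presented group with respect to `X ∪ X⁻¹`;
its restriction to (the image of) the semigroup is the induced metric. -/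
noncomputable def gdist {X : Type*} (Rel : Set (List X × List X))
    (g h : PresentedGroup (relators Rel)) : ℕ∞ :=
  sInf {n : ℕ∞ | ∃ l : List (X × Bool),
    (l.map (fun b => if b.2 then (PresentedGroup.of b.1 : PresentedGroup (relators Rel))
      else (PresentedGroup.of b.1)⁻¹)).prod = g⁻¹ * h ∧ (l.length : ℕ∞) = n}

/-- `W` and `U` are `k`-fellow-travellers with respect to the induced metric. -/
noncomputable def KFT {X : Type*} (Rel : Set (List X × List X)) (k : ℕ)
    (W U : List X) : Prop :=
  ∀ n : ℕ, gdist Rel (toG Rel (W.take n)) (toG Rel (U.take n)) ≤ (k : ℕ∞)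

/-- `L` is an automatic structure for the semigroup presented by `Rel`. -/
def IsAutomaticStructure {X : Type*} (Rel : Set (List X × List X))
    (L : Language X) : Prop :=
  L.IsRegular ∧ (∀ u : List X, ∃ w ∈ L, SGRel Rel w u) ∧
  ∀ x : Option X, Language.IsRegular
    {p : List (Option X × Option X) | ∃ W ∈ L, ∃ U ∈ L,
      SGRel Rel (W ++ x.toList) U ∧ p = pad W U}

/-- The semigroup presented by `Rel` is automatic. -/
def IsAutomatic {X : Type*} (Rel : Set (List X × List X)) : Prop :=
  ∃ L : Language X, IsAutomaticStructure Rel L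

/-- `𝓑`: the set of (nonempty) subwords of defining words. -/
def Bset {X : Type*} (Rel : Set (List X × List X)) : Set (List X) :=
  {W | W ≠ [] ∧ ∃ D ∈ defWords Rel, W <:+: D}

/-- A word over the alphabet `Φ = {φ_W : W ∈ 𝓑}`, recorded as its list of blocks. -/
def IsPhiWord {X : Type*} (Rel : Set (List X × List X)) (A : List (List X)) : Prop :=
  ∀ W ∈ A, W ∈ Bset Rel

/-- `A = φ_{W₁}⋯φ_{Wₙ}` is admissible: no product of consecutive blocks lies in `𝓑`. -/
def Admissible {X : Type*} (Rel : Set (List X × List X)) (A : List (List X)) : Prop :=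
  List.Chain' (fun u v => (u ++ v) ∉ Bset Rel) A

/-- The block preceding position `i` (`0`-based), with `W₀ = ε`. -/
def prevBlock {X : Type*} (A : List (List X)) (i : ℕ) : List X :=
  if i = 0 then [] else A.getD (i - 1) []

/-- The `i`-th (0-based) coordinate of the auxiliary vector `κ_A` equals `1`:
there are decompositions `W_{i-1} = q ++ p` and `W_{i+1} = s ++ t` with
`p ++ W_i ++ s` a defining word whose piece-length exceeds that of its complement. -/
def KappaOne {X : Type*} (Rel : Set (List X × List X)) (A : List (List X)) (i : ℕ) : Prop :=
  ∃ p s q t : List X,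
    prevBlock A i = q ++ p ∧ A.getD (i + 1) [] = s ++ t ∧
    (p ++ A.getD i [] ++ s) ∈ defWords Rel ∧
    ∃ C : List X, ((p ++ A.getD i [] ++ s, C) ∈ Rel ∨ (C, p ++ A.getD i [] ++ s) ∈ Rel) ∧
      pieceLength (defWords Rel) C < pieceLength (defWords Rel) (p ++ A.getD i [] ++ s)

/-- `A` is efficient: admissible and `κ_A` is the zero vector. -/
def Efficient {X : Type*} (Rel : Set (List X × List X)) (A : List (List X)) : Prop :=
  Admissible Rel A ∧ ∀ i < A.length, ¬ KappaOne Rel A i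

/-- Condition (†): each defining relation `L = R` satisfies `lp L + lp R ≥ 7`. -/
def Dagger {X : Type*} (Rel : Set (List X × List X)) : Prop :=
  ∀ p ∈ Rel, 7 ≤ pieceLength (defWords Rel) p.1 + pieceLength (defWords Rel) p.2

/-- The Piefer order: `A ≼ B` iff `κ_A = κ_B` or `κ_A` precedes `κ_B` in shortlex. -/
def PieferLe {X : Type*} (Rel : Set (List X × List X)) (A B : List (List X)) : Prop :=
  A.length < B.length ∨ (A.length = B.length ∧
    ((∀ i < B.length, (KappaOne Rel A i ↔ KappaOne Rel B i)) ∨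
      ∃ j < B.length, (∀ i < j, (KappaOne Rel A i ↔ KappaOne Rel B i)) ∧
        ¬ KappaOne Rel A j ∧ KappaOne Rel B j))

/-- `A` is left-greedy: no block extended by the first letter of the next block is in `𝓑`. -/
def LeftGreedy {X : Type*} (Rel : Set (List X × List X)) (A : List (List X)) : Prop :=
  List.Chain' (fun u v => ∀ x ∈ v.head?, (u ++ [x]) ∉ Bset Rel) A

/-- The word metric on the co-presented group with respect to the generating set
`𝓑 ∪ 𝓑⁻¹`; its restriction to the semigroup is the induced metric `d_Φ`. -/
noncomputable def dPhi {X : Type*} (Rel : Set (List X × List X))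
    (g h : PresentedGroup (relators Rel)) : ℕ∞ :=
  sInf {n : ℕ∞ | ∃ l : List (List X × Bool), (∀ b ∈ l, b.1 ∈ Bset Rel) ∧
    (l.map (fun b => if b.2 then toG Rel b.1 else (toG Rel b.1)⁻¹)).prod = g⁻¹ * h ∧
    (l.length : ℕ∞) = n}

section LGAux

variable {X : Type*} (Rel : Set (List X × List X))

/-- Candidate lengths of prefixes of `w` lying in `𝓑`. -/
def gpS (w : List X) : Set ℕ := {k | 1 ≤ k ∧ k ≤ w.length ∧ w.take k ∈ Bset Rel}

/-- Length of the greedy (longest) prefix of `w` lying in `𝓑` (at least 1). -/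
noncomputable def gp (w : List X) : ℕ := max 1 (sSup (gpS Rel w))

lemma gp_pos (w : List X) : 1 ≤ gp Rel w := le_max_left _ _

lemma gpS_bdd (w : List X) : BddAbove (gpS Rel w) := ⟨w.length, fun _ hk => hk.2.1⟩

lemma Bset_infix {V W : List X} (hW : W ∈ Bset Rel) (hVW : V <:+: W) (hV : V ≠ []) :
    V ∈ Bset Rel := by
  obtain ⟨_, D, hD, hWD⟩ := hW
  exact ⟨hV, D, hD, hVW.trans hWD⟩

lemma letters_of_phi {C : List (List X)} (hC : IsPhiWord Rel C) :
    ∀ x ∈ C.flatten, [x] ∈ Bset Rel := by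
  intro x hx
  obtain ⟨l, hl, hxl⟩ := List.mem_flatten.mp hx
  obtain ⟨s, t, hst⟩ := List.append_of_mem hxl
  exact Bset_infix Rel (hC l hl) ⟨s, t, by simp [hst]⟩ (by simp)

lemma gp_mem {w : List X} (hw : ∀ x ∈ w, [x] ∈ Bset Rel) (hne : w ≠ []) :
    gp Rel w ∈ gpS Rel w := by
  have h1 : (1 : ℕ) ∈ gpS Rel w := by
    obtain ⟨a, t, rfl⟩ : ∃ a t, w = a :: t := by
      cases w with
      | nil => exact absurd rfl hne
      | cons a t => exact ⟨a, t, rfl⟩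
    exact ⟨le_refl 1, by simp, by simpa using hw a (by simp)⟩
  have hmem := Nat.sSup_mem ⟨1, h1⟩ (gpS_bdd Rel w)
  have : gp Rel w = sSup (gpS Rel w) := max_eq_right hmem.1
  rw [this]; exact hmem

lemma le_gp {w : List X} {k : ℕ} (hk : k ∈ gpS Rel w) : k ≤ gp Rel w :=
  le_trans (le_csSup (gpS_bdd Rel w) hk) (le_max_right _ _)

/-- Left-greedy factorization of a word over the dictionary `𝓑`. -/
noncomputable def lg : (w : List X) → List (List X)
  | [] => []
  | a :: t =>
    ((a :: t).take (gp Rel (a :: t))) :: lg ((a :: t).drop (gp Rel (a :: t)))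
termination_by w => w.length
decreasing_by
  have h1 : 1 ≤ gp Rel (a :: t) := gp_pos Rel (a :: t)
  simp only [List.length_drop]
  simp
  omega

lemma lg_nil : lg Rel ([] : List X) = [] := by rw [lg]

lemma lg_cons {w : List X} (h : w ≠ []) :
    lg Rel w = w.take (gp Rel w) :: lg Rel (w.drop (gp Rel w)) := by
  cases w with
  | nil => exact absurd rfl h
  | cons a t => rw [lg]

lemma lg_flatten (w : List X) : (lg Rel w).flatten = w := by
  by_cases h : w = []
  · subst h; rw [lg_nil]; rfl
  · rw [lg_cons Rel h]
    have := lg_flatten (w.drop (gp Rel w))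
    simp [this]
termination_by w.length
decreasing_by
  have h1 : 1 ≤ gp Rel w := gp_pos Rel w
  have h2 : 0 < w.length := List.length_pos_iff.mpr h
  simp only [List.length_drop]
  omega

lemma lg_phi {w : List X} (hw : ∀ x ∈ w, [x] ∈ Bset Rel) :
    IsPhiWord Rel (lg Rel w) := by
  by_cases h : w = []
  · subst h; rw [lg_nil]; intro W hW; simp at hW
  · rw [lg_cons Rel h]
    intro W hW
    rcases List.mem_cons.mp hW with rfl | hW
    · exact (gp_mem Rel hw h).2.2
    · exact lg_phi (fun x hx => hw x (List.drop_subset _ _ hx)) W hW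
termination_by w.length
decreasing_by
  have h1 : 1 ≤ gp Rel w := gp_pos Rel w
  have h2 : 0 < w.length := List.length_pos_iff.mpr h
  simp only [List.length_drop]
  omega

lemma head?_take' {α : Type*} {l : List α} {k : ℕ} (hk : 1 ≤ k) :
    (l.take k).head? = l.head? := by
  cases l with
  | nil => simp
  | cons a t =>
    cases k with
    | zero => omega
    | succ m => simp [List.take_succ_cons]

lemma gp_lt_of_drop_ne_nil {w : List X} (h : w.drop (gp Rel w) ≠ []) :
    gp Rel w < w.length := by
  have := List.length_pos_iff.mpr h
  simp only [List.length_drop] at this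
  omega

lemma lg_greedy {w : List X} (hw : ∀ x ∈ w, [x] ∈ Bset Rel) :
    LeftGreedy Rel (lg Rel w) := by
  by_cases h : w = []
  · subst h; rw [lg_nil]; exact List.isChain_nil
  · rw [lg_cons Rel h, LeftGreedy, List.Chain', List.isChain_cons]
    refine ⟨?_, lg_greedy (fun x hx => hw x (List.drop_subset _ _ hx))⟩
    intro y hy x hx hmem
    by_cases hrne : w.drop (gp Rel w) = []
    · rw [hrne, lg_nil] at hy; simp at hy
    obtain ⟨a, t, hat⟩ : ∃ a t, w.drop (gp Rel w) = a :: t :=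
      List.exists_cons_of_ne_nil hrne
    rw [lg_cons Rel hrne, List.head?_cons, Option.mem_def, Option.some.injEq] at hy
    subst hy
    rw [head?_take' (gp_pos Rel _), hat, List.head?_cons, Option.mem_def,
      Option.some.injEq] at hx
    subst hx
    have hlt : gp Rel w < w.length := gp_lt_of_drop_ne_nil Rel hrne
    have hpref : w.take (gp Rel w) ++ [a] <+: w := by
      refine ⟨t, ?_⟩
      rw [List.append_assoc]
      simp only [List.singleton_append]
      rw [← hat, List.take_append_drop]
    have hulen : (w.take (gp Rel w) ++ [a]).length = gp Rel w + 1 := by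
      simp [List.length_take]
      omega
    have htake : w.take (gp Rel w + 1) = w.take (gp Rel w) ++ [a] := by
      have := List.prefix_iff_eq_take.mp hpref
      rw [hulen] at this
      exact this.symm
    have hk : gp Rel w + 1 ∈ gpS Rel w := ⟨by omega, by omega, by rw [htake]; exact hmem⟩
    have := le_gp Rel hk
    omega
termination_by w.length
decreasing_by
  have h1 : 1 ≤ gp Rel w := gp_pos Rel w
  have h2 : 0 < w.length := List.length_pos_iff.mpr h
  simp only [List.length_drop]
  omega


lemma drop_append_ge {α : Type*} (c l : List α) {k : ℕ} (hk : c.length ≤ k) :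
    (c ++ l).drop k = l.drop (k - c.length) := by
  have h : k = c.length + (k - c.length) := by omega
  rw [List.drop_append, List.drop_eq_nil_of_le hk, List.nil_append]

lemma lg_mono : ∀ (n : ℕ) (w : List X), w.length ≤ n → (∀ x ∈ w, [x] ∈ Bset Rel) →
    ∀ r, r <:+ w → (lg Rel r).length ≤ (lg Rel w).length := by
  intro n
  induction n with
  | zero =>
    intro w hwlen hw r hr
    have hwe : w = [] := List.length_eq_zero_iff.mp (Nat.le_zero.mp hwlen)
    subst hwe
    rw [List.suffix_nil] at hr
    subst hr
    exact le_refl _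
  | succ n ih =>
    intro w hwlen hw r hr
    by_cases h : w = []
    · subst h
      rw [List.suffix_nil] at hr
      subst hr
      exact le_refl _
    · have hgle : gp Rel w ≤ w.length := (gp_mem Rel hw h).2.1
      have hg1 : 1 ≤ gp Rel w := gp_pos Rel w
      have hwpos : 0 < w.length := List.length_pos_iff.mpr h
      have hrestlen : (w.drop (gp Rel w)).length ≤ n := by
        simp only [List.length_drop]; omega
      have hwrest : ∀ x ∈ w.drop (gp Rel w), [x] ∈ Bset Rel :=
        fun x hx => hw x (List.drop_subset _ _ hx)
      rw [lg_cons Rel h]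
      have hrlen : r.length ≤ w.length := hr.length_le
      have hrd : r = w.drop (w.length - r.length) := List.suffix_iff_eq_drop.mp hr
      have e1 : ∀ k : ℕ, r.drop k = w.drop ((w.length - r.length) + k) := by
        intro k
        nth_rewrite 1 [hrd]
        rw [List.drop_drop]
      by_cases hcase : r.length ≤ (w.drop (gp Rel w)).length
      · have hdge : gp Rel w ≤ w.length - r.length := by
          simp only [List.length_drop] at hcase; omega
        have hsub : r <:+ w.drop (gp Rel w) := by
          rw [hrd]
          have heq : w.drop (w.length - r.length)
              = (w.drop (gp Rel w)).drop (w.length - r.length - gp Rel w) := by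
            rw [List.drop_drop]; congr 1; omega
          rw [heq]
          exact List.drop_suffix _ _
        have := ih (w.drop (gp Rel w)) hrestlen hwrest r hsub
        simp only [List.length_cons]
        omega
      · push_neg at hcase
        simp only [List.length_drop] at hcase
        have hrne : r ≠ [] := by
          intro hre; subst hre
          simp only [List.length_nil] at hcase
          omega
        have hdlt : w.length - r.length < gp Rel w := by omega
        have h1 : (w.take (gp Rel w)).drop (w.length - r.length)
            = r.take (gp Rel w - (w.length - r.length)) := by
          rw [List.drop_take, ← hrd]
        have hppos : 0 < ((w.take (gp Rel w)).drop (w.length - r.length)).length := by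
          simp only [List.length_drop, List.length_take]
          omega
        have hp' : r.take (gp Rel w - (w.length - r.length)) ∈ Bset Rel := by
          rw [← h1]
          exact Bset_infix Rel (gp_mem Rel hw h).2.2 (List.drop_suffix _ _).isInfix
            (List.length_pos_iff.mp hppos)
        have hk : gp Rel w - (w.length - r.length) ∈ gpS Rel r :=
          ⟨by omega, by omega, hp'⟩
        have hgpr : gp Rel w - (w.length - r.length) ≤ gp Rel r := le_gp Rel hk
        rw [lg_cons Rel hrne]
        have hsub2 : r.drop (gp Rel r) <:+ w.drop (gp Rel w) := by
          rw [e1]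
          have e2 : w.drop ((w.length - r.length) + gp Rel r)
              = (w.drop (gp Rel w)).drop ((w.length - r.length) + gp Rel r - gp Rel w) := by
            rw [List.drop_drop]; congr 1; omega
          rw [e2]
          exact List.drop_suffix _ _
        have := ih (w.drop (gp Rel w)) hrestlen hwrest _ hsub2
        simp only [List.length_cons]
        omega

lemma lg_min : ∀ C : List (List X), IsPhiWord Rel C →
    (lg Rel C.flatten).length ≤ C.length := by
  intro C
  induction C with
  | nil => intro _; simp [lg_nil]
  | cons c C' ih =>
    intro hC
    have hc : c ∈ Bset Rel := hC c (by simp)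
    have hcne : c ≠ [] := hc.1
    have hcpos : 0 < c.length := List.length_pos_iff.mpr hcne
    have hC' : IsPhiWord Rel C' := fun W hW => hC W (List.mem_cons_of_mem _ hW)
    have hw : ∀ x ∈ c ++ C'.flatten, [x] ∈ Bset Rel := by
      have := letters_of_phi Rel hC
      rwa [List.flatten_cons] at this
    have hne : c ++ C'.flatten ≠ [] := by
      intro h
      exact hcne (List.append_eq_nil_iff.mp h).1
    have hkc : c.length ∈ gpS Rel (c ++ C'.flatten) := by
      refine ⟨hcpos, by simp, ?_⟩
      rw [List.take_left]
      exact hc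
    have hgp : c.length ≤ gp Rel (c ++ C'.flatten) := le_gp Rel hkc
    rw [List.flatten_cons, lg_cons Rel hne]
    have hsuffix : (c ++ C'.flatten).drop (gp Rel (c ++ C'.flatten)) <:+ C'.flatten := by
      rw [drop_append_ge c C'.flatten hgp]
      exact List.drop_suffix _ _
    have h1 := lg_mono Rel C'.flatten.length C'.flatten le_rfl
      (letters_of_phi Rel hC') _ hsuffix
    have h2 : (lg Rel C'.flatten).length ≤ C'.length := ih hC'
    simp only [List.length_cons]
    omega

lemma lg_unique : ∀ C : List (List X), IsPhiWord Rel C → LeftGreedy Rel C →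
    C = lg Rel C.flatten := by
  intro C
  induction C with
  | nil => intro _ _; simp [lg_nil]
  | cons c C' ih =>
    intro hC hLG
    have hc : c ∈ Bset Rel := hC c (by simp)
    have hcne : c ≠ [] := hc.1
    have hcpos : 0 < c.length := List.length_pos_iff.mpr hcne
    have hC' : IsPhiWord Rel C' := fun W hW => hC W (List.mem_cons_of_mem _ hW)
    have hw : ∀ x ∈ c ++ C'.flatten, [x] ∈ Bset Rel := by
      have := letters_of_phi Rel hC
      rwa [List.flatten_cons] at this
    have hne : c ++ C'.flatten ≠ [] := by
      intro h
      exact hcne (List.append_eq_nil_iff.mp h).1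
    have hkc : c.length ∈ gpS Rel (c ++ C'.flatten) := by
      refine ⟨hcpos, by simp, ?_⟩
      rw [List.take_left]
      exact hc
    have hcgp : c.length ≤ gp Rel (c ++ C'.flatten) := le_gp Rel hkc
    have hgple : gp Rel (c ++ C'.flatten) ≤ (c ++ C'.flatten).length :=
      (gp_mem Rel hw hne).2.1
    have heq : c.length = gp Rel (c ++ C'.flatten) := by
      by_contra hne2
      have hlt : c.length < gp Rel (c ++ C'.flatten) := lt_of_le_of_ne hcgp hne2
      have hC'fne : C'.flatten ≠ [] := by
        intro hfe
        have hl2 : (c ++ C'.flatten).length = c.length := by rw [hfe]; simp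
        omega
      have hC'ne : C' ≠ [] := by
        intro hce; rw [hce] at hC'fne; simp at hC'fne
      obtain ⟨c', C'', rfl⟩ := List.exists_cons_of_ne_nil hC'ne
      have hc'ne : c' ≠ [] := (hC c' (by simp)).1
      obtain ⟨a, t', hat⟩ := List.exists_cons_of_ne_nil hc'ne
      have hnb : c ++ [a] ∉ Bset Rel := by
        have hch := (List.isChain_cons_cons.mp hLG).1
        exact hch a (by rw [hat]; rfl)
      have hpref2 : c ++ [a] <+: c ++ (c' :: C'').flatten := by
        refine ⟨t' ++ C''.flatten, ?_⟩
        rw [List.append_assoc]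
        simp [hat]
      have hprefgp : c ++ [a] <+: (c ++ (c' :: C'').flatten).take
          (gp Rel (c ++ (c' :: C'').flatten)) := by
        refine List.prefix_of_prefix_length_le hpref2 (List.take_prefix _ _) ?_
        simp only [List.length_append, List.length_singleton, List.length_take]
        simp only [List.length_append] at hgple
        omega
      have hinB : c ++ [a] ∈ Bset Rel :=
        Bset_infix Rel (gp_mem Rel hw hne).2.2 hprefgp.isInfix (by simp)
      exact hnb hinB
    have hctake : c = (c ++ C'.flatten).take (gp Rel (c ++ C'.flatten)) := by
      rw [← heq, List.take_left]
    have hdrop : (c ++ C'.flatten).drop (gp Rel (c ++ C'.flatten)) = C'.flatten := by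
      rw [← heq, List.drop_left]
    rw [List.flatten_cons, lg_cons Rel hne, ← hctake, hdrop]
    congr 1
    exact ih hC' (List.IsChain.tail hLG)

end LGAux

/-- For every `A ∈ Φ*` there is a unique left-greedy `A' ∈ Φ*` with `η(A) = η(A')`;
moreover `A'` is semi-geodesic: `|A'| ≤ |B|` for every `B ∈ Φ*` with `η(B) = η(A)`. -/
theorem leftGreedy_exists_unique_semiGeodesic {X : Type*}
    (Rel : Set (List X × List X)) (hK : K32 Rel) (hD : Dagger Rel)
    (A : List (List X)) (hA : IsPhiWord Rel A) :
    ∃ A' : List (List X), IsPhiWord Rel A' ∧ LeftGreedy Rel A' ∧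
      A'.flatten = A.flatten ∧
      (∀ B : List (List X), IsPhiWord Rel B → LeftGreedy Rel B →
        B.flatten = A.flatten → B = A') ∧
      (∀ B : List (List X), IsPhiWord Rel B → B.flatten = A.flatten →
        A'.length ≤ B.length) := by
  have hw := letters_of_phi Rel hA
  refine ⟨lg Rel A.flatten, lg_phi Rel hw, lg_greedy Rel hw, lg_flatten Rel _, ?_, ?_⟩
  · intro B hB hBlg hBf
    have h := lg_unique Rel B hB hBlg
    rw [hBf] at h
    exact h
  · intro B hB hBf
    have h1 := lg_min Rel B hB
    rw [hBf] at h1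
    exact h1
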